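/- Let A be a real symmetric positive semidefinite (p+q)×(p+q) matrix with block form A = [[A₁₁,A₁₂],[A₂₁,A₂₂]] (A₁₁ of size p×p, A₂₂ of size q×q, A₂₁ = A₁₂ᵀ). Then: (i) there exists a q×p matrix i with A₂₂·i = A₂₁, and every x ∈ ℝ^q with A₂₂x = 0 satisfies A₁₂x = 0; consequently the kernel-image trace Tr_KI^q(I − A) (tracing out the last q coordinates of the map I − A : ℝ^p⊕ℝ^q → ℝ^p⊕ℝ^q) is defined; and (ii) for any i with A₂₂·i = A₂₁, setting A' := A₁₁ − A₁₂·i, one has Tr_KI^q(I − A) = I_p − A', and for every v ∈ ℝ^p the quantity vᵀA'v is the minimum over w ∈ ℝ^q of the quadratic form (v,w)ᵀ A (v,w), the minimum being attained at w = −i·v. -/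

import Mathlib

open Matrix
open scoped RealInnerProductSpace

/-- Solvability of `M x = y` for a real symmetric matrix `M` when `y` is orthogonal
to the kernel of `M`. -/
lemma solve_symm {q : ℕ} (M : Matrix (Fin q) (Fin q) ℝ) (hM : M.IsHermitian)
    (y : Fin q → ℝ) (hy : ∀ x : Fin q → ℝ, M.mulVec x = 0 → y ⬝ᵥ x = 0) :
    ∃ x : Fin q → ℝ, M.mulVec x = y := by
  have hTsym : M.toEuclideanLin.IsSymmetric := Matrix.isHermitian_iff_isSymmetric.mp hM
  set T : EuclideanSpace ℝ (Fin q) →ₗ[ℝ] EuclideanSpace ℝ (Fin q) := M.toEuclideanLin with hT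
  set K : Submodule ℝ (EuclideanSpace ℝ (Fin q)) := LinearMap.range T with hK
  have happ : ∀ z : EuclideanSpace ℝ (Fin q),
      T z = (WithLp.equiv 2 (Fin q → ℝ)).symm (M.mulVec (WithLp.equiv 2 (Fin q → ℝ) z)) := by
    intro z; exact Matrix.toEuclideanLin_apply M z
  obtain ⟨u, hu, z, hz, hyz⟩ := K.exists_add_mem_mem_orthogonal
    ((WithLp.equiv 2 (Fin q → ℝ)).symm y)
  have hTz : T z = 0 := by
    have h1 : ⟪T (T z), z⟫ = 0 := by
      have := (Submodule.mem_orthogonal K z).mp hz (T (T z)) ⟨T z, rfl⟩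
      simpa [real_inner_comm] using this
    have h2 : ⟪T z, T z⟫ = 0 := by rw [← hTsym (T z) z]; exact h1
    exact inner_self_eq_zero.mp h2
  have hMz : M.mulVec (WithLp.equiv 2 (Fin q → ℝ) z) = 0 := by
    have := happ z
    rw [hTz] at this
    have := congrArg (WithLp.equiv 2 (Fin q → ℝ)) this
    simpa using this.symm
  have hdz : y ⬝ᵥ (WithLp.equiv 2 (Fin q → ℝ) z) = 0 := hy _ hMz
  have hz0 : z = 0 := by
    have hinner : ⟪(WithLp.equiv 2 (Fin q → ℝ)).symm y, z⟫ = 0 := by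
      have he : ⟪(WithLp.equiv 2 (Fin q → ℝ)).symm y, z⟫
          = y ⬝ᵥ (WithLp.equiv 2 (Fin q → ℝ)) z := by
        simp [PiLp.inner_apply, dotProduct, mul_comm]
      rw [he, hdz]
    rw [hyz] at hinner
    have huz : ⟪u, z⟫ = 0 := by
      have := (Submodule.mem_orthogonal K z).mp hz u hu
      simpa [real_inner_comm] using this
    have : ⟪z, z⟫ = 0 := by
      rw [inner_add_left, huz, zero_add] at hinner; exact hinner
    exact inner_self_eq_zero.mp this
  rw [hz0, add_zero] at hyz
  obtain ⟨x, hx⟩ := hu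
  refine ⟨WithLp.equiv 2 (Fin q → ℝ) x, ?_⟩
  have : T x = (WithLp.equiv 2 (Fin q → ℝ)).symm y := by rw [hx, hyz]
  rw [happ x] at this
  have := congrArg (WithLp.equiv 2 (Fin q → ℝ)) this
  simpa using this

/-- Entries of a matrix product as a matrix-vector product with a column. -/
lemma mul_col_apply {m n k : Type*} [Fintype n] (M : Matrix m n ℝ) (N : Matrix n k ℝ)
    (a : m) (b : k) : (M * N) a b = M.mulVec (fun r => N r b) a := by
  simp [Matrix.mul_apply, Matrix.mulVec, dotProduct]

/-- A witness for the kernel-image trace (tracing out the last block) of a real block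
matrix `f` : a pair `(k, i)` with `(I − f₂₂)·i = f₂₁` and `k·(I − f₂₂) = f₁₂`. -/
def KIWm {p q : ℕ} (f : Matrix (Fin p ⊕ Fin q) (Fin p ⊕ Fin q) ℝ)
    (k : Matrix (Fin p) (Fin q) ℝ) (i : Matrix (Fin q) (Fin p) ℝ) : Prop :=
  (1 - f.toBlocks₂₂) * i = f.toBlocks₂₁ ∧ k * (1 - f.toBlocks₂₂) = f.toBlocks₁₂

/-- For a real positive semidefinite block matrix `A`, the kernel-image trace of
`I − A` is defined; its value is `I − A'` where `A' = A₁₁ − A₁₂·i` for any `i` with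
`A₂₂·i = A₂₁`, and `vᵀA'v` is the minimum of the quadratic form of `A` over all
extensions `(v,w)`, attained at `w = −i·v`. -/
theorem trKI_of_posSemidef {p q : ℕ}
    (A : Matrix (Fin p ⊕ Fin q) (Fin p ⊕ Fin q) ℝ) (hA : A.PosSemidef) :
    -- (i)
    ((∃ i : Matrix (Fin q) (Fin p) ℝ, A.toBlocks₂₂ * i = A.toBlocks₂₁) ∧
     (∀ x : Fin q → ℝ, A.toBlocks₂₂.mulVec x = 0 → A.toBlocks₁₂.mulVec x = 0) ∧
     (∃ (k : Matrix (Fin p) (Fin q) ℝ) (i : Matrix (Fin q) (Fin p) ℝ),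
        KIWm (1 - A) k i)) ∧
    -- (ii)
    (∀ i : Matrix (Fin q) (Fin p) ℝ, A.toBlocks₂₂ * i = A.toBlocks₂₁ →
      (∀ (k : Matrix (Fin p) (Fin q) ℝ) (i' : Matrix (Fin q) (Fin p) ℝ),
        KIWm (1 - A) k i' →
        (1 - A).toBlocks₁₁ + (1 - A).toBlocks₁₂ * i' =
          1 - (A.toBlocks₁₁ - A.toBlocks₁₂ * i)) ∧
      (∀ v : Fin p → ℝ,
        (∀ w : Fin q → ℝ,
          v ⬝ᵥ (A.toBlocks₁₁ - A.toBlocks₁₂ * i).mulVec v ≤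
            (Sum.elim v w) ⬝ᵥ A.mulVec (Sum.elim v w)) ∧
        v ⬝ᵥ (A.toBlocks₁₁ - A.toBlocks₁₂ * i).mulVec v =
          (Sum.elim v (-(i.mulVec v))) ⬝ᵥ A.mulVec (Sum.elim v (-(i.mulVec v))))) := by
  -- basic symmetry and positivity facts
  have hsym : ∀ x y, A x y = A y x := by
    intro x y
    conv_lhs => rw [← hA.1]
    simp [Matrix.conjTranspose_apply]
  have hq : ∀ x, 0 ≤ x ⬝ᵥ A.mulVec x := fun x => by simpa using hA.dotProduct_mulVec_nonneg x
  have h21 : A.toBlocks₂₁ = (A.toBlocks₁₂)ᵀ := by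
    ext a b; simp [Matrix.toBlocks₂₁, Matrix.toBlocks₁₂, Matrix.transpose_apply, hsym]
  have h22sym : (A.toBlocks₂₂)ᵀ = A.toBlocks₂₂ := by
    ext a b; simp [Matrix.toBlocks₂₂, Matrix.transpose_apply, hsym]
  have h22herm : (A.toBlocks₂₂).IsHermitian := by
    simpa [Matrix.IsHermitian, Matrix.conjTranspose_eq_transpose_of_trivial] using h22sym
  -- quadratic form expansion
  have hQ : ∀ (u : Fin p → ℝ) (w : Fin q → ℝ),
      Sum.elim u w ⬝ᵥ A.mulVec (Sum.elim u w)
        = u ⬝ᵥ A.toBlocks₁₁.mulVec u + u ⬝ᵥ A.toBlocks₁₂.mulVec w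
          + w ⬝ᵥ A.toBlocks₂₁.mulVec u + w ⬝ᵥ A.toBlocks₂₂.mulVec w := by
    intro u w
    conv_lhs => rw [← Matrix.fromBlocks_toBlocks A]
    rw [Matrix.fromBlocks_mulVec, sumElim_dotProduct_sumElim,
      dotProduct_add, dotProduct_add]
    simp only [Sum.elim_comp_inl, Sum.elim_comp_inr]
    ring
  -- A₂₂ is positive semidefinite
  have hpsd22 : ∀ x : Fin q → ℝ, 0 ≤ x ⬝ᵥ A.toBlocks₂₂.mulVec x := by
    intro x
    have := hq (Sum.elim 0 x)
    rw [hQ] at this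
    simpa using this
  -- kernel inclusion
  have hker : ∀ x : Fin q → ℝ, A.toBlocks₂₂.mulVec x = 0 → A.toBlocks₁₂.mulVec x = 0 := by
    intro x hx
    by_contra hne
    set w : Fin p → ℝ := A.toBlocks₁₂.mulVec x with hw
    set c : ℝ := w ⬝ᵥ A.toBlocks₁₁.mulVec w with hc
    set d : ℝ := w ⬝ᵥ w with hd
    have hd0 : 0 < d := by
      have h0 : 0 ≤ d := Finset.sum_nonneg fun i _ => mul_self_nonneg _
      rcases lt_or_eq_of_le h0 with h | h
      · exact h
      · exact absurd (dotProduct_self_eq_zero.mp h.symm) hne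
    have key : ∀ t : ℝ, 0 ≤ c + 2 * t * d := by
      intro t
      have hpos := hq (Sum.elim w (t • x))
      rw [hQ] at hpos
      have e1 : w ⬝ᵥ A.toBlocks₁₂.mulVec (t • x) = t * d := by
        rw [Matrix.mulVec_smul, dotProduct_smul, ← hw, ← hd]; rfl
      have e2 : (t • x) ⬝ᵥ A.toBlocks₂₁.mulVec w = t * d := by
        rw [smul_dotProduct, h21, Matrix.dotProduct_mulVec,
          Matrix.vecMul_transpose, ← hw, ← hd]; rfl
      have e3 : (t • x) ⬝ᵥ A.toBlocks₂₂.mulVec (t • x) = 0 := by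
        rw [Matrix.mulVec_smul, hx]; simp
      rw [e1, e2, e3, ← hc] at hpos
      linarith
    have h2td : 2 * (-(c + 1) / (2 * d)) * d = -(c + 1) := by
      field_simp
    have := key (-(c + 1) / (2 * d))
    rw [h2td] at this
    linarith
  -- existence of i
  have hcol : ∀ j : Fin p, ∃ x : Fin q → ℝ,
      A.toBlocks₂₂.mulVec x = fun r => A.toBlocks₂₁ r j := by
    intro j
    apply solve_symm _ h22herm
    intro x hx
    have hkx := congrFun (hker x hx) j
    simp only [Matrix.mulVec, dotProduct, Pi.zero_apply] at hkx ⊢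
    rw [← hkx]
    apply Finset.sum_congr rfl
    intro r _
    rw [h21]
    simp [Matrix.transpose_apply]
  choose sol hsol using hcol
  set i₀ : Matrix (Fin q) (Fin p) ℝ := Matrix.of (fun r c => sol c r) with hi₀
  have hI : A.toBlocks₂₂ * i₀ = A.toBlocks₂₁ := by
    ext a b
    rw [mul_col_apply]
    exact congrFun (hsol b) a
  -- blocks of 1 - A
  have hb11 : (1 - A).toBlocks₁₁ = 1 - A.toBlocks₁₁ := by
    ext a b
    simp [Matrix.toBlocks₁₁, Matrix.one_apply, Matrix.sub_apply]
  have hb12 : (1 - A).toBlocks₁₂ = -A.toBlocks₁₂ := by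
    ext a b
    simp [Matrix.toBlocks₁₂, Matrix.one_apply, Matrix.sub_apply]
  have hb21 : (1 - A).toBlocks₂₁ = -A.toBlocks₂₁ := by
    ext a b
    simp [Matrix.toBlocks₂₁, Matrix.one_apply, Matrix.sub_apply]
  have hb22 : (1 - A).toBlocks₂₂ = 1 - A.toBlocks₂₂ := by
    ext a b
    simp [Matrix.toBlocks₂₂, Matrix.one_apply, Matrix.sub_apply]
  have hb22' : (1 : Matrix (Fin q) (Fin q) ℝ) - (1 - A).toBlocks₂₂ = A.toBlocks₂₂ := by
    rw [hb22]; abel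
  have h12of : ∀ j : Matrix (Fin q) (Fin p) ℝ, A.toBlocks₂₂ * j = A.toBlocks₂₁ →
      A.toBlocks₁₂ = jᵀ * A.toBlocks₂₂ := by
    intro j hj
    have h := congrArg Matrix.transpose hj
    rw [Matrix.transpose_mul, h22sym, h21, Matrix.transpose_transpose] at h
    exact h.symm
  -- KIWm witness
  have hwit : KIWm (1 - A) (-i₀ᵀ) (-i₀) := by
    constructor
    · rw [hb22', hb21, Matrix.mul_neg, hI]
    · rw [hb22', hb12, Matrix.neg_mul, ← h12of i₀ hI]
  refine ⟨⟨⟨i₀, hI⟩, hker, ⟨-i₀ᵀ, -i₀, hwit⟩⟩, ?_⟩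
  intro i hi
  constructor
  · -- value of the trace is witness-independent
    intro k i' hki'
    have hA22i' : A.toBlocks₂₂ * i' = -A.toBlocks₂₁ := by
      have := hki'.1
      rwa [hb22', hb21] at this
    have hker0 : A.toBlocks₂₂ * (i' + i) = 0 := by
      rw [Matrix.mul_add, hA22i', hi]; abel
    have h120 : A.toBlocks₁₂ * (i' + i) = 0 := by
      ext a b
      have hxcol : A.toBlocks₂₂.mulVec (fun r => (i' + i) r b) = 0 := by
        funext a'
        have := congrFun (congrFun hker0 a') b
        rw [← mul_col_apply]
        simpa using this
      have := congrFun (hker _ hxcol) a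
      rw [mul_col_apply]
      simpa using this
    have hneg : A.toBlocks₁₂ * i' = -(A.toBlocks₁₂ * i) := by
      rw [Matrix.mul_add] at h120
      exact eq_neg_of_add_eq_zero_left h120
    rw [hb11, hb12, Matrix.neg_mul, hneg, neg_neg]
    abel
  · -- quadratic form minimization
    intro v
    set u₀ : Fin q → ℝ := i.mulVec v with hu₀
    have fsym : ∀ a b : Fin q → ℝ,
        a ⬝ᵥ A.toBlocks₂₂.mulVec b = b ⬝ᵥ A.toBlocks₂₂.mulVec a := by
      intro a b
      rw [Matrix.dotProduct_mulVec, ← Matrix.mulVec_transpose, h22sym,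
        dotProduct_comm]
    have f1 : ∀ w : Fin q → ℝ,
        v ⬝ᵥ A.toBlocks₁₂.mulVec w = u₀ ⬝ᵥ A.toBlocks₂₂.mulVec w := by
      intro w
      rw [h12of i hi, ← Matrix.mulVec_mulVec, Matrix.dotProduct_mulVec (v := v),
        Matrix.vecMul_transpose, ← hu₀]
    have f2 : ∀ w : Fin q → ℝ,
        w ⬝ᵥ A.toBlocks₂₁.mulVec v = u₀ ⬝ᵥ A.toBlocks₂₂.mulVec w := by
      intro w
      rw [← hi, ← Matrix.mulVec_mulVec, ← hu₀, fsym w u₀]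
    have f3 : v ⬝ᵥ (A.toBlocks₁₁ - A.toBlocks₁₂ * i).mulVec v
        = v ⬝ᵥ A.toBlocks₁₁.mulVec v - u₀ ⬝ᵥ A.toBlocks₂₂.mulVec u₀ := by
      rw [Matrix.sub_mulVec, dotProduct_sub, ← Matrix.mulVec_mulVec, ← hu₀, f1]
    constructor
    · intro w
      have hexp : (u₀ + w) ⬝ᵥ A.toBlocks₂₂.mulVec (u₀ + w)
          = u₀ ⬝ᵥ A.toBlocks₂₂.mulVec u₀ + 2 * (u₀ ⬝ᵥ A.toBlocks₂₂.mulVec w)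
            + w ⬝ᵥ A.toBlocks₂₂.mulVec w := by
        rw [Matrix.mulVec_add, add_dotProduct, dotProduct_add,
          dotProduct_add, fsym w u₀]
        ring
      have hpos := hpsd22 (u₀ + w)
      rw [hexp] at hpos
      rw [hQ, f1, f2, f3]
      linarith
    · rw [hQ, f1, f2, f3]
      have e1 : u₀ ⬝ᵥ A.toBlocks₂₂.mulVec (-u₀) = -(u₀ ⬝ᵥ A.toBlocks₂₂.mulVec u₀) := by
        rw [Matrix.mulVec_neg, dotProduct_neg]
      have e2 : (-u₀) ⬝ᵥ A.toBlocks₂₂.mulVec (-u₀) = u₀ ⬝ᵥ A.toBlocks₂₂.mulVec u₀ := by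
        rw [Matrix.mulVec_neg, dotProduct_neg, neg_dotProduct, neg_neg]
      rw [e1, e2]
      ring
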